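/- Let R be a (possibly non-unital) associative ring graded by paths, defined as follows: fix a finite set A ⊂ ℝ² with no three points collinear and a generic unit vector ζ; basis elements are ζ-convex polygonal paths in A; the product of paths γ (from i to j) and γ' (from j to k) is γ' ∘ γ if the concatenation is ζ-convex and 0 otherwise. Then this product is associative. -/

import Mathlib

open scoped Classical

/-- The union of the rays `w + ℝ₊·ζ` over `w ∈ s`. -/
def rayUnion (ζ : ℂ) (s : Set ℂ) : Set ℂ :=
  ⋃ w ∈ s, {z : ℂ | ∃ t : ℝ, 0 ≤ t ∧ z = w + (t : ℂ) * ζ}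

/-- The coordinate in the direction orthogonal to `ζ`. -/
noncomputable def hcoord (ζ z : ℂ) : ℝ := (z / (Complex.I * ζ)).re

/-- A `ζ`-convex polygonal path, as a nonempty list of points ordered by the
coordinate orthogonal to `ζ`, each point being a vertex (extreme point) of the convex
hull of the union of the rays out of the points of the list in direction `ζ`. -/
def IsZetaConvexList (ζ : ℂ) (l : List ℂ) : Prop :=
  l ≠ [] ∧ l.Pairwise (fun x y => hcoord ζ x < hcoord ζ y) ∧
  ∀ w ∈ l, w ∈ Set.extremePoints ℝ (convexHull ℝ (rayUnion ζ {x | x ∈ l}))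

/-- Product of two basis paths: the concatenation if the endpoints match and the
concatenation is again `ζ`-convex, and `0` (i.e. `none`) otherwise. -/
noncomputable def pathMul (ζ : ℂ) (γ γ' : List ℂ) : Option (List ℂ) :=
  if γ.getLast? = γ'.head? ∧ IsZetaConvexList ζ (γ ++ γ'.tail) then some (γ ++ γ'.tail)
  else none

/-- The product extended to `0` (`none`): the structure map of the path ring `R`. -/
noncomputable def optMul (ζ : ℂ) (a b : Option (List ℂ)) : Option (List ℂ) :=
  a.bind fun γ => b.bind fun γ' => pathMul ζ γ γ'

/-- Extremity is inherited by convex hulls of subsets. -/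
lemma extreme_mono {S T : Set ℂ} (hTS : T ⊆ S) {w : ℂ}
    (hw : w ∈ convexHull ℝ T)
    (hx : w ∈ Set.extremePoints ℝ (convexHull ℝ S)) :
    w ∈ Set.extremePoints ℝ (convexHull ℝ T) := by
  rw [mem_extremePoints] at hx ⊢
  exact ⟨hw, fun x hx' y hy' h =>
    hx.2 x (convexHull_mono hTS hx') y (convexHull_mono hTS hy') h⟩

/-- A nonempty, ordered list of points of a `ζ`-convex list is `ζ`-convex. -/
lemma zconv_sub {ζ : ℂ} {L l : List ℂ} (hL : IsZetaConvexList ζ L)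
    (hne : l ≠ []) (hp : l.Pairwise (fun x y => hcoord ζ x < hcoord ζ y))
    (hsub : ∀ x ∈ l, x ∈ L) : IsZetaConvexList ζ l := by
  refine ⟨hne, hp, fun w hw => ?_⟩
  have hmono : rayUnion ζ {x | x ∈ l} ⊆ rayUnion ζ {x | x ∈ L} := by
    refine Set.iUnion₂_subset fun x hx => ?_
    exact Set.subset_iUnion₂_of_subset x (hsub x hx) le_rfl
  have hwmem : w ∈ convexHull ℝ (rayUnion ζ {x | x ∈ l}) := by
    apply subset_convexHull
    exact Set.mem_biUnion hw ⟨0, le_rfl, by simp⟩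
  exact extreme_mono hmono hwmem (hL.2.2 w (hsub w hw))

/-- Associativity of the path algebra of `ζ`-convex polygonal paths in a finite set
`A ⊂ ℝ² = ℂ` with no three points collinear and generic unit `ζ`: the product
(concatenation if `ζ`-convex, zero otherwise) is associative on basis elements. -/
theorem path_algebra_assoc (A : Finset ℂ)
    (hcol : ∀ a ∈ A, ∀ b ∈ A, ∀ c ∈ A, a ≠ b → a ≠ c → b ≠ c →
      ¬ Collinear ℝ ({a, b, c} : Set ℂ))
    (ζ : ℂ) (hζ : ‖ζ‖ = 1) (hgen : Set.InjOn (hcoord ζ) (A : Set ℂ)) :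
    ∀ γ₁ γ₂ γ₃ : List ℂ,
      (∀ x ∈ γ₁, x ∈ A) → (∀ x ∈ γ₂, x ∈ A) → (∀ x ∈ γ₃, x ∈ A) →
      IsZetaConvexList ζ γ₁ → IsZetaConvexList ζ γ₂ → IsZetaConvexList ζ γ₃ →
      optMul ζ (optMul ζ (some γ₁) (some γ₂)) (some γ₃) =
        optMul ζ (some γ₁) (optMul ζ (some γ₂) (some γ₃)) := by
  intro γ₁ γ₂ γ₃ _ _ _ h1 h2 h3
  have n1 := h1.1
  have n2 := h2.1
  obtain ⟨b, t, rfl⟩ : ∃ b t, γ₂ = b :: t :=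
    ⟨γ₂.head n2, γ₂.tail, (List.cons_head_tail n2).symm⟩
  show optMul ζ (pathMul ζ γ₁ (b :: t)) (some γ₃) =
    optMul ζ (some γ₁) (pathMul ζ (b :: t) γ₃)
  by_cases hc12 : γ₁.getLast? = (b :: t).head?
  · have hb : γ₁.getLast n1 = b := by
      rw [List.getLast?_eq_getLast n1] at hc12
      simpa using hc12
    have hbmem : b ∈ γ₁ := hb ▸ List.getLast_mem n1
    have glast12 : (γ₁ ++ t).getLast? = (b :: t).getLast? := by
      cases t with
      | nil => simpa using hc12
      | cons c s =>
        rw [List.getLast?_cons_cons, List.getLast?_append,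
          List.getLast?_eq_getLast (l := c :: s) (by simp)]
        rfl
    by_cases hc23 : (b :: t).getLast? = γ₃.head?
    · by_cases htot : IsZetaConvexList ζ (γ₁ ++ t ++ γ₃.tail)
      · -- everything matches: both sides equal `some (γ₁ ++ t ++ γ₃.tail)`
        have h12 : IsZetaConvexList ζ (γ₁ ++ t) := by
          refine zconv_sub htot ?_ ?_ ?_
          · simp [n1]
          · exact htot.2.1.sublist (List.sublist_append_left _ _)
          · intro x hx
            exact List.mem_append_left _ hx
        have h23 : IsZetaConvexList ζ ((b :: t) ++ γ₃.tail) := by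
          refine zconv_sub htot ?_ ?_ ?_
          · simp
          · have hpw := htot.2.1
            rw [List.append_assoc, List.pairwise_append] at hpw
            rw [List.cons_append, List.pairwise_cons]
            exact ⟨fun y hy => hpw.2.2 b hbmem y hy, hpw.2.1⟩
          · intro x hx
            rw [List.cons_append, List.mem_cons] at hx
            rcases hx with rfl | hx
            · exact List.mem_append_left _ (List.mem_append_left _ hbmem)
            · rw [List.append_assoc]
              exact List.mem_append_right _ hx
        have A1 : pathMul ζ γ₁ (b :: t) = some (γ₁ ++ t) := if_pos ⟨hc12, h12⟩
        have A2 : pathMul ζ (b :: t) γ₃ = some ((b :: t) ++ γ₃.tail) :=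
          if_pos ⟨hc23, h23⟩
        rw [A1, A2]
        show pathMul ζ (γ₁ ++ t) γ₃ = pathMul ζ γ₁ ((b :: t) ++ γ₃.tail)
        have htot' : IsZetaConvexList ζ (γ₁ ++ ((b :: t) ++ γ₃.tail).tail) := by
          show IsZetaConvexList ζ (γ₁ ++ (t ++ γ₃.tail))
          rwa [← List.append_assoc]
        rw [pathMul, pathMul, if_pos ⟨glast12.trans hc23, htot⟩,
          if_pos ⟨hc12, htot'⟩]
        show some (γ₁ ++ t ++ γ₃.tail) = some (γ₁ ++ (t ++ γ₃.tail))
        rw [List.append_assoc]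
      · -- total concatenation not convex: both sides vanish
        have L : optMul ζ (pathMul ζ γ₁ (b :: t)) (some γ₃) = none := by
          unfold pathMul
          split
          · show pathMul ζ (γ₁ ++ t) γ₃ = none
            exact if_neg fun h => htot h.2
          · rfl
        have R : optMul ζ (some γ₁) (pathMul ζ (b :: t) γ₃) = none := by
          unfold pathMul
          split
          · show pathMul ζ γ₁ ((b :: t) ++ γ₃.tail) = none
            refine if_neg fun h => htot ?_
            have h2' := h.2
            rw [show ((b :: t) ++ γ₃.tail).tail = t ++ γ₃.tail from rfl,
              ← List.append_assoc] at h2'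
            exact h2'
          · rfl
        rw [L, R]
    · -- middle and right endpoints don't match: both sides vanish
      have L : optMul ζ (pathMul ζ γ₁ (b :: t)) (some γ₃) = none := by
        unfold pathMul
        split
        · show pathMul ζ (γ₁ ++ t) γ₃ = none
          exact if_neg fun h => hc23 (glast12.symm.trans h.1)
        · rfl
      have R : optMul ζ (some γ₁) (pathMul ζ (b :: t) γ₃) = none := by
        rw [show pathMul ζ (b :: t) γ₃ = none from if_neg fun h => hc23 h.1]
        rfl
      rw [L, R]
  · -- left and middle endpoints don't match: both sides vanish
    have L : optMul ζ (pathMul ζ γ₁ (b :: t)) (some γ₃) = none := by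
      rw [show pathMul ζ γ₁ (b :: t) = none from if_neg fun h => hc12 h.1]
      rfl
    have R : optMul ζ (some γ₁) (pathMul ζ (b :: t) γ₃) = none := by
      unfold pathMul
      split
      · show pathMul ζ γ₁ ((b :: t) ++ γ₃.tail) = none
        exact if_neg fun h => hc12 h.1
      · rfl
    rw [L, R]
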